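/- Let q be a prime power, s a divisor of n, and 𝒰 a k-dimensional F_q-subspace of F_{q^n} with 1 ∈ 𝒰 whose F_{q^s}-span has F_{q^s}-dimension r. Then the orbit of 𝒰 under the group of F_{q^s}-linear automorphisms of F_{q^n} has cardinality at least (1/[k choose r]_q) · ∏_{i=0}^{r-1}(q^n - q^{is}) / ∏_{i=0}^{r-1}(q^r - q^i). -/

import Mathlib

/-- The Gaussian binomial coefficient `[k choose r]_q` as a rational number. -/
def gaussBinom (q : ℚ) (k r : ℕ) : ℚ :=
  ∏ i ∈ Finset.range r, (q ^ (k - i) - 1) / (q ^ (r - i) - 1)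

section Aux

open Module

variable {E V : Type*} [Field E] [AddCommGroup V] [Module E V]

lemma sumExtend_apply_inl {ι : Type*} {v : ι → V} (hs : LinearIndependent E v) (i : ι) :
    Basis.sumExtend hs (Sum.inl i) = v i := by
  classical
  simp only [Basis.sumExtend, Basis.reindex_apply, Equiv.symm_symm, Trans.trans,
    Equiv.trans_apply, Equiv.sumCongr, Equiv.coe_fn_mk, Sum.map_inl,
    Equiv.Set.sumDiffSubset_apply_inl]
  change (Basis.extend hs.linearIndepOn_id (Equiv.Set.sumDiffSubset
    (hs.linearIndepOn_id.subset_extend _) (Sum.inl (Equiv.ofInjective v hs.injective i)))) = v i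
  simp [Basis.extend_apply_self]

lemma exists_linEquiv [Finite V] {r : ℕ} {u x : Fin r → V}
    (hu : LinearIndependent E u) (hx : LinearIndependent E x) :
    ∃ φ : V ≃ₗ[E] V, ∀ i, φ (u i) = x i := by
  classical
  cases nonempty_fintype V
  haveI : Fintype (Basis.sumExtendIndex hu) := Fintype.ofFinite _
  haveI : Fintype (Basis.sumExtendIndex hx) := Fintype.ofFinite _
  have hcu := Module.finrank_eq_card_basis (Basis.sumExtend hu)
  have hcx := Module.finrank_eq_card_basis (Basis.sumExtend hx)
  have hcard : Fintype.card (Basis.sumExtendIndex hu)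
      = Fintype.card (Basis.sumExtendIndex hx) := by
    simp only [Fintype.card_sum, Fintype.card_fin] at hcu hcx
    omega
  let e : (Fin r ⊕ Basis.sumExtendIndex hu) ≃ (Fin r ⊕ Basis.sumExtendIndex hx) :=
    Equiv.sumCongr (Equiv.refl (Fin r)) (Fintype.equivOfCardEq hcard)
  refine ⟨(Basis.sumExtend hu).equiv (Basis.sumExtend hx) e, fun i => ?_⟩
  rw [← sumExtend_apply_inl hu i, Basis.equiv_apply]
  simpa [e] using sumExtend_apply_inl hx i

lemma gaussBinom_mul {q : ℚ} (hq : 1 < q) {k r : ℕ} (hrk : r ≤ k) :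
    gaussBinom q k r * ∏ i ∈ Finset.range r, (q ^ r - q ^ i)
      = ∏ i ∈ Finset.range r, (q ^ k - q ^ i) := by
  unfold gaussBinom
  rw [← Finset.prod_mul_distrib]
  refine Finset.prod_congr rfl fun i hi => ?_
  rw [Finset.mem_range] at hi
  have h1 : q ^ i * q ^ (r - i) = q ^ r := by rw [← pow_add]; congr 1; omega
  have h2 : q ^ i * q ^ (k - i) = q ^ k := by rw [← pow_add]; congr 1; omega
  have hlt : 1 < q ^ (r - i) := one_lt_pow₀ hq (by omega)
  have hne : q ^ (r - i) - 1 ≠ 0 := sub_ne_zero.2 (ne_of_gt hlt)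
  rw [← h1, ← h2, show q ^ i * q ^ (r - i) - q ^ i = q ^ i * (q ^ (r - i) - 1) by ring,
    show q ^ i * q ^ (k - i) - q ^ i = q ^ i * (q ^ (k - i) - 1) by ring]
  field_simp

end Aux

/-- Let `F ⊆ E ⊆ K` be finite fields and `𝒰` a `k`-dimensional `F`-subspace of `K` with
`1 ∈ 𝒰` whose `E`-span has `E`-dimension `r`. Then the orbit of `𝒰` under the `E`-linear
automorphisms of `K` has cardinality at least
`(1/[k choose r]_q) ∏_{i<r}(q^n - q^{is}) / ∏_{i<r}(q^r - q^i)`. -/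
theorem stmt12 (F E K : Type*) [Field F] [Field E] [Field K]
    [Algebra F E] [Algebra E K] [Algebra F K] [IsScalarTower F E K]
    [Fintype F] [Fintype E] [Fintype K]
    (k r : ℕ) (𝒰 : Submodule F K) (hdim : Module.finrank F ↥𝒰 = k) (h1 : (1 : K) ∈ 𝒰)
    (hspan : Module.finrank E ↥(Submodule.span E (𝒰 : Set K)) = r) :
    (∏ i ∈ Finset.range r, ((Fintype.card K : ℚ) - (Fintype.card E : ℚ) ^ i)) /
        (gaussBinom (Fintype.card F : ℚ) k r *
          ∏ i ∈ Finset.range r, ((Fintype.card F : ℚ) ^ r - (Fintype.card F : ℚ) ^ i))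
      ≤ (Set.ncard {V : Submodule F K | ∃ φ : K ≃ₗ[E] K,
          V = 𝒰.map (φ.toLinearMap.restrictScalars F)} : ℚ) := by
  classical
  have hq1 : 1 < Fintype.card F := Fintype.one_lt_card
  have hQ1 : 1 < Fintype.card E := Fintype.one_lt_card
  have hFE : Function.Injective fun c : F => c • (1 : E) := by
    have h : (fun c : F => c • (1 : E)) = ⇑(algebraMap F E) := by
      funext c; rw [Algebra.algebraMap_eq_smul_one]
    rw [h]
    exact (algebraMap F E).injective
  -- choose an E-independent family u in 𝒰 of size r
  obtain ⟨b, hbU, hbspan, hbind⟩ := exists_linearIndependent E ((𝒰 : Set K))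
  haveI : Fintype b := Fintype.ofFinite _
  have hbfin : Fintype.card b = r := by
    have h := finrank_span_set_eq_card hbind
    rw [hbspan, hspan] at h
    rw [← Set.toFinset_card, h]
  let eb : Fin r ≃ b := (Fintype.equivFinOfCardEq hbfin).symm
  let u : Fin r → K := fun i => (eb i : K)
  have hu : LinearIndependent E u := hbind.comp eb eb.injective
  have humem : ∀ i, u i ∈ 𝒰 := fun i => hbU (eb i).2
  -- r ≤ k
  have hrk : r ≤ k := by
    have huF : LinearIndependent F u := hu.restrict_scalars hFE
    have huF' : LinearIndependent F (𝒰.subtype ∘ fun i => (⟨u i, humem i⟩ : ↥𝒰)) := huF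
    have huU : LinearIndependent F (fun i => (⟨u i, humem i⟩ : ↥𝒰)) :=
      huF'.of_comp 𝒰.subtype
    simpa [hdim] using huU.fintype_card_le_finrank
  have hm : r ≤ Module.finrank E K := hspan ▸ Submodule.finrank_le _
  haveI : Finite (Submodule F K) := Finite.of_injective _ SetLike.coe_injective
  -- the type of E-independent r-tuples in K
  haveI : Fintype {s : Fin r → K // LinearIndependent E s} := Fintype.ofFinite _
  have hTcard : Fintype.card {s : Fin r → K // LinearIndependent E s}
      = ∏ i : Fin r, (Fintype.card K - Fintype.card E ^ (i : ℕ)) := by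
    rw [← Nat.card_eq_fintype_card, card_linearIndependent (K := E) (V := K) hm]
    exact Finset.prod_congr rfl fun i _ => by
      rw [Module.card_eq_pow_finrank (K := E) (V := K)]
  have hφ : ∀ s : {s : Fin r → K // LinearIndependent E s},
      ∃ φ : K ≃ₗ[E] K, ∀ i, φ (u i) = s.1 i := fun s => exists_linEquiv hu s.2
  choose φ hφspec using hφ
  let g : {s : Fin r → K // LinearIndependent E s} → Submodule F K :=
    fun s => 𝒰.map ((φ s).toLinearMap.restrictScalars F)
  -- fiber bound
  have hfiber : ∀ V ∈ Finset.univ.image g,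
      (Finset.univ.filter fun s => g s = V).card
        ≤ ∏ i : Fin r, (Fintype.card F ^ k - Fintype.card F ^ (i : ℕ)) := by
    intro V hV
    obtain ⟨s₀, -, hs₀⟩ := Finset.mem_image.1 hV
    have hVdim : Module.finrank F ↥V = k := by
      rw [← hs₀]
      exact (LinearEquiv.finrank_map_eq (LinearEquiv.restrictScalars F (φ s₀)) 𝒰).trans hdim
    haveI : Fintype {x : Fin r → ↥V // LinearIndependent F x} := Fintype.ofFinite _
    have hT' : Fintype.card {x : Fin r → ↥V // LinearIndependent F x}
        = ∏ i : Fin r, (Fintype.card F ^ k - Fintype.card F ^ (i : ℕ)) := by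
      rw [← Nat.card_eq_fintype_card,
        card_linearIndependent (K := F) (V := ↥V) (by rw [hVdim]; exact hrk), hVdim]
    have hmemV : ∀ s, g s = V → ∀ i, s.1 i ∈ V := by
      intro s hs i
      rw [← hs]
      exact Submodule.mem_map.2 ⟨u i, humem i, hφspec s i⟩
    rw [← hT', ← Fintype.card_coe]
    refine Fintype.card_le_of_injective (fun a =>
      ⟨fun i => ⟨a.1.1 i, hmemV a.1 (Finset.mem_filter.1 a.2).2 i⟩, ?_⟩) ?_
    · have hF : LinearIndependent F a.1.1 := a.1.2.restrict_scalars hFE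
      have hF' : LinearIndependent F
          (V.subtype ∘ fun i => (⟨a.1.1 i, hmemV a.1 (Finset.mem_filter.1 a.2).2 i⟩ : ↥V)) := hF
      exact hF'.of_comp V.subtype
    · intro a a' h
      ext i
      exact congrArg Subtype.val (congrFun (congrArg Subtype.val h) i)
  have hmain : Fintype.card {s : Fin r → K // LinearIndependent E s}
      ≤ (∏ i : Fin r, (Fintype.card F ^ k - Fintype.card F ^ (i : ℕ)))
        * (Finset.univ.image g).card := by
    rw [← Finset.card_univ]
    exact Finset.card_le_mul_card_image Finset.univ _ hfiber
  -- the image is contained in the orbit set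
  set Ω : Set (Submodule F K) := {V : Submodule F K | ∃ φ : K ≃ₗ[E] K,
      V = 𝒰.map (φ.toLinearMap.restrictScalars F)} with hΩ
  have himg : (Finset.univ.image g).card ≤ Ω.ncard := by
    rw [← Set.ncard_coe_finset]
    refine Set.ncard_le_ncard ?_ (Set.toFinite _)
    intro V hV
    obtain ⟨s, -, rfl⟩ := Finset.mem_image.1 (Finset.mem_coe.1 hV)
    exact ⟨φ s, rfl⟩
  -- cast everything to ℚ
  have hcast1 : ((Fintype.card {s : Fin r → K // LinearIndependent E s} : ℕ) : ℚ)
      = ∏ i ∈ Finset.range r, ((Fintype.card K : ℚ) - (Fintype.card E : ℚ) ^ i) := by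
    rw [hTcard, Fin.prod_univ_eq_prod_range (fun i => Fintype.card K - Fintype.card E ^ i) r]
    push_cast
    refine Finset.prod_congr rfl fun i hi => ?_
    rw [Finset.mem_range] at hi
    have hle : Fintype.card E ^ i ≤ Fintype.card K := by
      rw [Module.card_eq_pow_finrank (K := E) (V := K)]
      exact Nat.pow_le_pow_right (le_of_lt hQ1) (by omega)
    push_cast [Nat.cast_sub hle]
    ring
  have hcast2 : ((∏ i : Fin r, (Fintype.card F ^ k - Fintype.card F ^ (i : ℕ)) : ℕ) : ℚ)
      = ∏ i ∈ Finset.range r, ((Fintype.card F : ℚ) ^ k - (Fintype.card F : ℚ) ^ i) := by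
    rw [Fin.prod_univ_eq_prod_range (fun i => Fintype.card F ^ k - Fintype.card F ^ i) r]
    push_cast
    refine Finset.prod_congr rfl fun i hi => ?_
    rw [Finset.mem_range] at hi
    have hle : Fintype.card F ^ i ≤ Fintype.card F ^ k :=
      Nat.pow_le_pow_right (le_of_lt hq1) (by omega)
    push_cast [Nat.cast_sub hle]
    ring
  have hq1' : (1 : ℚ) < (Fintype.card F : ℚ) := by exact_mod_cast hq1
  have hPpos : (0 : ℚ)
      < ∏ i ∈ Finset.range r, ((Fintype.card F : ℚ) ^ k - (Fintype.card F : ℚ) ^ i) := by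
    refine Finset.prod_pos fun i hi => ?_
    rw [Finset.mem_range] at hi
    exact sub_pos.2 (pow_lt_pow_right₀ hq1' (by omega))
  rw [gaussBinom_mul hq1' hrk, div_le_iff₀ hPpos]
  calc (∏ i ∈ Finset.range r, ((Fintype.card K : ℚ) - (Fintype.card E : ℚ) ^ i))
      = ((Fintype.card {s : Fin r → K // LinearIndependent E s} : ℕ) : ℚ) := hcast1.symm
    _ ≤ ((∏ i : Fin r, (Fintype.card F ^ k - Fintype.card F ^ (i : ℕ))) * Ω.ncard : ℕ) := by
        exact_mod_cast le_trans hmain (Nat.mul_le_mul_left _ himg)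
    _ = (Ω.ncard : ℚ)
        * ∏ i ∈ Finset.range r, ((Fintype.card F : ℚ) ^ k - (Fintype.card F : ℚ) ^ i) := by
        push_cast [hcast2]
        ring
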